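/- Fix r ≥ 1, pairwise distinct nonzero reals θ₁,…,θ_r, reals a < b, and an analytic function G on ℂ\[a,b] with: G(z) ∈ ℝ iff z ∈ ℝ; G'(z) < 0 for all real z ∉ [a,b]; and G(z) → 0 as |z| → ∞. Let M_G(z) = diag(1−θ₁G(z),…,1−θ_rG(z)). Then the set of z ∈ ℂ\[a,b] at which M_G(z) is singular is a finite set of real points z₁ > ⋯ > z_p, where p equals the number of indices i with G(a⁻) < 1/θ_i < G(b⁺), and at each z_i the matrix M_G(z_i) has rank exactly r−1. -/

import Mathlib

open Set Filter Topology Matrix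

/-- Continuity lemma setup: for pairwise distinct nonzero reals
`θ₁,…,θ_r` and an analytic `G` on `ℂ∖[a,b]` which is real exactly on the reals, has
negative derivative on `ℝ∖[a,b]`, and tends to `0` at infinity, the set of
`z ∈ ℂ∖[a,b]` where `M_G(z) = diag(1−θᵢG(z))` is singular is a finite decreasing
family of real points `z₁ > ⋯ > z_p`, with `p` the number of `i` such that
`G(a⁻) < 1/θᵢ < G(b⁺)`, and `M_G(zᵢ)` has rank exactly `r−1`. -/
theorem stmt_18 (r : ℕ) (hr : 1 ≤ r)
    (θ : Fin r → ℝ) (hθ0 : ∀ i, θ i ≠ 0) (hθd : Function.Injective θ)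
    (a b : ℝ) (hab : a < b)
    (G : ℂ → ℂ)
    (hGan : AnalyticOnNhd ℂ G {z : ℂ | z ∉ (Complex.ofReal '' Set.Icc a b)})
    (hGreal : ∀ z ∉ (Complex.ofReal '' Set.Icc a b), ((G z).im = 0 ↔ z.im = 0))
    (hG' : ∀ x : ℝ, x ∉ Set.Icc a b →
        (deriv G (x : ℂ)).im = 0 ∧ (deriv G (x : ℂ)).re < 0)
    (hG0 : Tendsto G (cocompact ℂ) (𝓝 0))
    (Ga Gb : EReal)
    (hGa : Tendsto (fun x : ℝ => ((G (x : ℂ)).re : EReal)) (𝓝[<] a) (𝓝 Ga))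
    (hGb : Tendsto (fun x : ℝ => ((G (x : ℂ)).re : EReal)) (𝓝[>] b) (𝓝 Gb)) :
    ∃ (p : ℕ) (zs : Fin p → ℝ), StrictAnti zs ∧
      p = Nat.card {i : Fin r // Ga < (((θ i)⁻¹ : ℝ) : EReal)
          ∧ (((θ i)⁻¹ : ℝ) : EReal) < Gb} ∧
      {z : ℂ | z ∉ (Complex.ofReal '' Set.Icc a b) ∧
          (Matrix.diagonal (fun i => 1 - (θ i : ℂ) * G z)).det = 0}
        = Set.range (fun i : Fin p => ((zs i : ℂ))) ∧
      ∀ i : Fin p,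
        (Matrix.diagonal (fun j => 1 - (θ j : ℂ) * G ((zs i : ℂ)))).rank = r - 1 := by
  set g : ℝ → ℝ := fun x => (G x).re with hgdef
  -- membership lemma
  have hmem : ∀ x : ℝ, (x : ℂ) ∈ (Complex.ofReal '' Set.Icc a b) ↔ x ∈ Set.Icc a b := by
    intro x
    constructor
    · rintro ⟨y, hy, hxy⟩
      rwa [Complex.ofReal_inj.mp hxy] at hy
    · intro hx; exact ⟨x, hx, rfl⟩
  have hmem' : ∀ x : ℝ, x ∉ Set.Icc a b → (x : ℂ) ∈ {z : ℂ | z ∉ (Complex.ofReal '' Set.Icc a b)} := by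
    intro x hx
    simp only [Set.mem_setOf_eq]
    rw [hmem x]
    exact hx
  -- G is real on real points outside [a,b]
  have hreal : ∀ x : ℝ, x ∉ Set.Icc a b → G (x : ℂ) = ((g x : ℝ) : ℂ) := by
    intro x hx
    have him : (G (x : ℂ)).im = 0 := (hGreal _ (hmem' x hx)).mpr (Complex.ofReal_im x)
    exact Complex.ext rfl (by simp [him])
  -- derivative of g
  have hder : ∀ x : ℝ, x ∉ Set.Icc a b → HasDerivAt g ((deriv G (x : ℂ)).re) x := by
    intro x hx
    exact ((hGan _ (hmem' x hx)).differentiableAt.hasDerivAt).real_of_complex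
  -- strict antitonicity
  have hanti1 : StrictAntiOn g (Set.Iio a) := by
    have hni : ∀ x ∈ Set.Iio a, x ∉ Set.Icc a b := fun x hx => by
      simp only [Set.mem_Iio] at hx; simp [Set.mem_Icc]; intro h; linarith
    refine strictAntiOn_of_deriv_neg (convex_Iio a)
      (fun x hx => ((hder x (hni x hx)).differentiableAt.continuousAt).continuousWithinAt) ?_
    intro x hx
    rw [interior_Iio] at hx
    rw [(hder x (hni x hx)).deriv]
    exact (hG' x (hni x hx)).2
  have hanti2 : StrictAntiOn g (Set.Ioi b) := by
    have hni : ∀ x ∈ Set.Ioi b, x ∉ Set.Icc a b := fun x hx => by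
      simp only [Set.mem_Ioi] at hx; simp [Set.mem_Icc]; intro h; linarith
    refine strictAntiOn_of_deriv_neg (convex_Ioi b)
      (fun x hx => ((hder x (hni x hx)).differentiableAt.continuousAt).continuousWithinAt) ?_
    intro x hx
    rw [interior_Ioi] at hx
    rw [(hder x (hni x hx)).deriv]
    exact (hG' x (hni x hx)).2
  -- limits at infinity
  have hoc : Tendsto (fun x : ℝ => (x : ℂ)) (Bornology.cobounded ℝ) (cocompact ℂ) :=
    Complex.isometry_ofReal.antilipschitz.tendsto_cobounded.mono_right
      Metric.cobounded_eq_cocompact.le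
  have hlimBot : Tendsto g atBot (𝓝 0) := by
    have : Tendsto (fun x : ℝ => G (x : ℂ)) atBot (𝓝 0) :=
      hG0.comp (hoc.mono_left (by rw [Real.cobounded_eq]; exact le_sup_left))
    have h := (Complex.continuous_re.tendsto 0).comp this
    rw [Complex.zero_re] at h
    exact h
  have hlimTop : Tendsto g atTop (𝓝 0) := by
    have : Tendsto (fun x : ℝ => G (x : ℂ)) atTop (𝓝 0) :=
      hG0.comp (hoc.mono_left (by rw [Real.cobounded_eq]; exact le_sup_right))
    have h := (Complex.continuous_re.tendsto 0).comp this
    rw [Complex.zero_re] at h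
    exact h
  have hIio : ∀ x ∈ Set.Iio a, x ∉ Set.Icc a b := fun x hx => by
    simp only [Set.mem_Iio] at hx
    simp only [Set.mem_Icc, not_and_or, not_le]
    exact Or.inl hx
  have hIoi : ∀ x ∈ Set.Ioi b, x ∉ Set.Icc a b := fun x hx => by
    simp only [Set.mem_Ioi] at hx
    simp only [Set.mem_Icc, not_and_or, not_le]
    exact Or.inr hx
  -- g ≤ 0 on Iio a, then g < 0
  have hle0 : ∀ x < a, g x ≤ 0 := by
    intro x hx
    refine ge_of_tendsto hlimBot ?_
    filter_upwards [eventually_lt_atBot x] with w hw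
    exact le_of_lt (hanti1 (lt_trans hw hx) hx hw)
  have hneg : ∀ x < a, g x < 0 := by
    intro x hx
    have h1 : g x < g (x - 1) := hanti1 (Set.mem_Iio.mpr (by linarith)) hx (by linarith)
    exact lt_of_lt_of_le h1 (hle0 _ (by linarith))
  have hge0 : ∀ x, b < x → 0 ≤ g x := by
    intro x hx
    refine le_of_tendsto hlimTop ?_
    filter_upwards [eventually_gt_atTop x] with w hw
    exact le_of_lt (hanti2 hx (lt_trans hx hw) hw)
  have hpos : ∀ x, b < x → 0 < g x := by
    intro x hx
    have h1 : g (x + 1) < g x := hanti2 hx (Set.mem_Ioi.mpr (by linarith)) (by linarith)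
    exact lt_of_le_of_lt (hge0 _ (by linarith)) h1
  -- Ga < g x for x < a
  have hGalt : ∀ x < a, Ga < ((g x : ℝ) : EReal) := by
    intro x hx
    set y := (x + a) / 2 with hy
    have hxy : x < y := by rw [hy]; linarith
    have hya : y < a := by rw [hy]; linarith
    have h1 : Ga ≤ ((g y : ℝ) : EReal) := by
      refine le_of_tendsto hGa ?_
      filter_upwards [Ioo_mem_nhdsLT hya] with w hw
      exact_mod_cast le_of_lt (hanti1 hya hw.2 hw.1)
    have h2 : g y < g x := hanti1 hx hya hxy
    exact lt_of_le_of_lt h1 (by exact_mod_cast h2)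
  have hltGb : ∀ x, b < x → ((g x : ℝ) : EReal) < Gb := by
    intro x hx
    set y := (b + x) / 2 with hy
    have hby : b < y := by rw [hy]; linarith
    have hyx : y < x := by rw [hy]; linarith
    have h1 : ((g y : ℝ) : EReal) ≤ Gb := by
      refine ge_of_tendsto hGb ?_
      filter_upwards [Ioo_mem_nhdsGT hby] with w hw
      exact_mod_cast le_of_lt (hanti2 hw.1 hby hw.2)
    have h2 : g x < g y := hanti2 hby hx hyx
    exact lt_of_lt_of_le (by exact_mod_cast h2) h1
  have hGa0 : Ga < (0 : EReal) := by
    have := hGalt (a - 1) (by linarith)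
    have h2 : g (a-1) < 0 := hneg _ (by linarith)
    refine lt_trans this ?_
    exact_mod_cast h2
  have hGb0 : (0 : EReal) < Gb := by
    have := hltGb (b + 1) (by linarith)
    have h2 : 0 < g (b+1) := hpos _ (by linarith)
    refine lt_trans ?_ this
    exact_mod_cast h2
  classical
  -- continuity on subintervals
  have hcont1 : ContinuousOn g (Set.Iio a) := fun x hx =>
    ((hder x (hIio x hx)).differentiableAt.continuousAt).continuousWithinAt
  have hcont2 : ContinuousOn g (Set.Ioi b) := fun x hx =>
    ((hder x (hIoi x hx)).differentiableAt.continuousAt).continuousWithinAt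
  -- existence of solutions on (b, ∞)
  have hexist2 : ∀ t : ℝ, 0 < t → (t : EReal) < Gb → ∃ x, b < x ∧ g x = t := by
    intro t ht htGb
    have h1 : ∀ᶠ w in 𝓝[>] b, (t : EReal) < ((g w : ℝ) : EReal) := hGb.eventually (lt_mem_nhds htGb)
    obtain ⟨w, hw1, hw2⟩ := (h1.and self_mem_nhdsWithin).exists
    rw [EReal.coe_lt_coe_iff] at hw1
    have h2 : ∀ᶠ x in atTop, g x < t := hlimTop.eventually (gt_mem_nhds ht)
    obtain ⟨x₂, hx₂1, hx₂2⟩ := (h2.and (eventually_ge_atTop (w + 1))).exists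
    have hwx : w ≤ x₂ := by linarith
    have hsub : Set.Icc w x₂ ⊆ Set.Ioi b := fun y hy => lt_of_lt_of_le hw2 hy.1
    have := intermediate_value_Icc' hwx (hcont2.mono hsub)
    obtain ⟨x, hx1, hx2⟩ := this ⟨le_of_lt hx₂1, le_of_lt hw1⟩
    exact ⟨x, lt_of_lt_of_le hw2 hx1.1, hx2⟩
  have hexist1 : ∀ t : ℝ, t < 0 → Ga < (t : EReal) → ∃ x, x < a ∧ g x = t := by
    intro t ht htGa
    have h1 : ∀ᶠ w in 𝓝[<] a, ((g w : ℝ) : EReal) < (t : EReal) := hGa.eventually (gt_mem_nhds htGa)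
    obtain ⟨w, hw1, hw2⟩ := (h1.and self_mem_nhdsWithin).exists
    rw [EReal.coe_lt_coe_iff] at hw1
    have h2 : ∀ᶠ x in atBot, t < g x := hlimBot.eventually (lt_mem_nhds ht)
    obtain ⟨x₁, hx₁1, hx₁2⟩ := (h2.and (eventually_le_atBot (w - 1))).exists
    have hwx : x₁ ≤ w := by linarith
    have hsub : Set.Icc x₁ w ⊆ Set.Iio a := fun y hy => lt_of_le_of_lt hy.2 hw2
    have := intermediate_value_Icc' hwx (hcont1.mono hsub)
    obtain ⟨x, hx1, hx2⟩ := this ⟨le_of_lt hw1, le_of_lt hx₁1⟩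
    exact ⟨x, lt_of_le_of_lt hx1.2 hw2, hx2⟩
  -- the index set
  set P : Fin r → Prop := fun i => Ga < (((θ i)⁻¹ : ℝ) : EReal) ∧ (((θ i)⁻¹ : ℝ) : EReal) < Gb
    with hPdef
  set T : Finset (Fin r) := Finset.univ.filter P with hTdef
  have hsol : ∀ i ∈ T, ∃ x, (x < a ∨ b < x) ∧ g x = (θ i)⁻¹ := by
    intro i hi
    rw [hTdef, Finset.mem_filter] at hi
    obtain ⟨-, hi1, hi2⟩ := hi
    rcases lt_or_gt_of_ne (inv_ne_zero (hθ0 i)) with h | h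
    · obtain ⟨x, hx1, hx2⟩ := hexist1 _ h hi1
      exact ⟨x, Or.inl hx1, hx2⟩
    · obtain ⟨x, hx1, hx2⟩ := hexist2 _ h hi2
      exact ⟨x, Or.inr hx1, hx2⟩
  set xsol : Fin r → ℝ := fun i => if h : i ∈ T then (hsol i h).choose else 0 with hxsoldef
  have hxsol : ∀ i ∈ T, (xsol i < a ∨ b < xsol i) ∧ g (xsol i) = (θ i)⁻¹ := by
    intro i hi
    rw [hxsoldef]
    simp only [dif_pos hi]
    exact (hsol i hi).choose_spec
  -- sign determines the region
  have hregion : ∀ x : ℝ, (x < a ∨ b < x) → ∀ i : Fin r, g x = (θ i)⁻¹ →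
      ((θ i)⁻¹ < 0 → x < a) ∧ (0 < (θ i)⁻¹ → b < x) := by
    intro x hx i hgi
    rcases hx with h | h
    · have := hneg x h
      rw [hgi] at this
      exact ⟨fun _ => h, fun h0 => absurd this (not_lt.mpr (le_of_lt h0))⟩
    · have := hpos x h
      rw [hgi] at this
      exact ⟨fun h0 => absurd this (not_lt.mpr (le_of_lt h0)), fun _ => h⟩
  -- injectivity of xsol on T
  have hganti : ∀ x y : ℝ, (x < a ∨ b < x) → (y < a ∨ b < y) → g x = g y → x = y := by
    intro x y hx hy hgxy
    rcases hx with h1 | h1 <;> rcases hy with h2 | h2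
    · exact hanti1.injOn h1 h2 hgxy
    · exfalso
      have hx0 := hneg x h1
      have hy0 := hpos y h2
      rw [hgxy] at hx0
      linarith
    · exfalso
      have hx0 := hpos x h1
      have hy0 := hneg y h2
      rw [hgxy] at hx0
      linarith
    · exact hanti2.injOn h1 h2 hgxy
  have hinj : Set.InjOn xsol T := by
    intro i hi j hj hij
    have h1 := hxsol i hi
    have h2 := hxsol j hj
    have : (θ i)⁻¹ = (θ j)⁻¹ := by rw [← h1.2, ← h2.2, hij]
    exact hθd (inv_injective this)
  set S : Finset ℝ := T.image xsol with hSdef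
  have hgr : ∀ x : ℝ, (x < a ∨ b < x) ↔ x ∉ Set.Icc a b := by
    intro x
    simp only [Set.mem_Icc, not_and_or, not_le]
  -- characterization of S
  have hSmem : ∀ x : ℝ, x ∈ S ↔ ((x < a ∨ b < x) ∧ ∃ i, g x = (θ i)⁻¹) := by
    intro x
    constructor
    · intro hx
      rw [hSdef, Finset.mem_image] at hx
      obtain ⟨i, hi, rfl⟩ := hx
      exact ⟨(hxsol i hi).1, i, (hxsol i hi).2⟩
    · rintro ⟨hx, i, hgi⟩
      have hiT : i ∈ T := by
        rw [hTdef, Finset.mem_filter, hPdef]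
        refine ⟨Finset.mem_univ _, ?_, ?_⟩
        · rcases hx with h | h
          · rw [← hgi]; exact hGalt x h
          · have h0 : 0 < g x := hpos x h
            refine lt_trans hGa0 ?_
            rw [← hgi]; exact_mod_cast h0
        · rcases hx with h | h
          · have h0 : g x < 0 := hneg x h
            refine lt_trans ?_ hGb0
            rw [← hgi]; exact_mod_cast h0
          · rw [← hgi]; exact hltGb x h
      have := hxsol i hiT
      have hx' : x = xsol i := hganti x (xsol i) hx this.1 (by rw [hgi, this.2])
      rw [hSdef, Finset.mem_image]
      exact ⟨i, hiT, hx'.symm⟩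
  -- the determinant characterization
  have hdet : ∀ z : ℂ, (Matrix.diagonal (fun i => 1 - (θ i : ℂ) * G z)).det = 0 ↔
      ∃ k : Fin r, G z = (((θ k)⁻¹ : ℝ) : ℂ) := by
    intro z
    rw [Matrix.det_diagonal, Finset.prod_eq_zero_iff]
    constructor
    · rintro ⟨k, -, hk⟩
      refine ⟨k, ?_⟩
      have hθk : ((θ k : ℝ) : ℂ) ≠ 0 := by exact_mod_cast hθ0 k
      rw [Complex.ofReal_inv]
      field_simp
      linear_combination -hk
    · rintro ⟨k, hk⟩
      refine ⟨k, Finset.mem_univ _, ?_⟩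
      have hθk : ((θ k : ℝ) : ℂ) ≠ 0 := by exact_mod_cast hθ0 k
      rw [hk, Complex.ofReal_inv]
      field_simp
      ring
  -- the family of points
  set zs : Fin S.card → ℝ := fun i => ((S.orderIsoOfFin rfl) i.rev : ℝ) with hzsdef
  have hzanti : StrictAnti zs := by
    intro i j hij
    have h1 : j.rev < i.rev := Fin.rev_lt_rev.mpr hij
    exact Subtype.coe_lt_coe.mpr ((S.orderIsoOfFin rfl).strictMono h1)
  have hrange : ∀ x : ℝ, (∃ i, zs i = x) ↔ x ∈ S := by
    intro x
    constructor
    · rintro ⟨i, rfl⟩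
      exact ((S.orderIsoOfFin rfl) i.rev).2
    · intro hx
      refine ⟨((S.orderIsoOfFin rfl).symm ⟨x, hx⟩).rev, ?_⟩
      rw [hzsdef]
      simp only [Fin.rev_rev, OrderIso.apply_symm_apply]
  refine ⟨S.card, zs, hzanti, ?_, ?_, ?_⟩
  · -- cardinality
    rw [hSdef, Finset.card_image_of_injOn hinj, hTdef]
    rw [Nat.card_eq_fintype_card, Fintype.card_subtype]
  · -- set equality
    ext z
    simp only [Set.mem_setOf_eq, Set.mem_range]
    constructor
    · rintro ⟨hz1, hz2⟩
      rw [hdet z] at hz2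
      obtain ⟨k, hk⟩ := hz2
      have hzim : z.im = 0 := (hGreal z hz1).mp (by rw [hk]; exact Complex.ofReal_im _)
      have hzx : z = ((z.re : ℝ) : ℂ) := Complex.ext rfl (by simp [hzim])
      set x := z.re with hxdef
      rw [hzx] at hz1 hk
      have hxI : x ∉ Set.Icc a b := fun h => hz1 ⟨x, h, rfl⟩
      have hgx : g x = (θ k)⁻¹ := by
        have h2 := hreal x hxI
        rw [h2] at hk
        exact_mod_cast hk
      have hxS : x ∈ S := (hSmem x).mpr ⟨(hgr x).mpr hxI, k, hgx⟩
      obtain ⟨i, hi⟩ := (hrange x).mpr hxS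
      exact ⟨i, by rw [hi, ← hzx]⟩
    · rintro ⟨i, rfl⟩
      have hxS : zs i ∈ S := (hrange _).mp ⟨i, rfl⟩
      obtain ⟨hx1, k, hk⟩ := (hSmem _).mp hxS
      have hxI : zs i ∉ Set.Icc a b := (hgr _).mp hx1
      refine ⟨fun h => hxI ((hmem _).mp h), ?_⟩
      rw [hdet]
      exact ⟨k, by rw [hreal _ hxI, hk]⟩
  · -- rank
    intro i
    have hxS : zs i ∈ S := (hrange _).mp ⟨i, rfl⟩
    obtain ⟨hx1, k, hk⟩ := (hSmem _).mp hxS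
    have hxI : zs i ∉ Set.Icc a b := (hgr _).mp hx1
    have hGz : G ((zs i : ℝ) : ℂ) = (((θ k)⁻¹ : ℝ) : ℂ) := by rw [hreal _ hxI, hk]
    rw [Matrix.rank_diagonal]
    have hiff : ∀ j : Fin r, (1 - (θ j : ℂ) * G ((zs i : ℝ) : ℂ) ≠ 0) ↔ ¬ (j = k) := by
      intro j
      rw [hGz]
      rw [not_iff_not]
      have hθk : ((θ k : ℝ) : ℂ) ≠ 0 := by exact_mod_cast hθ0 k
      rw [Complex.ofReal_inv, sub_eq_zero, eq_comm, mul_inv_eq_one₀ hθk]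
      rw [show ((θ j : ℝ) : ℂ) = ((θ k : ℝ) : ℂ) ↔ θ j = θ k from Complex.ofReal_inj]
      exact hθd.eq_iff
    rw [Fintype.card_congr (Equiv.subtypeEquivRight hiff)]
    rw [Fintype.card_subtype_compl, Fintype.card_subtype_eq, Fintype.card_fin]
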